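/- Let 𝔐 be a class of preference models and ★ a dynamic operator closed over 𝔐. The schema [★φ][<](¬φ → ξ) → (φ → [<][★φ](¬φ → ξ)) is valid in ⟨𝔐, ★⟩ for all φ ∈ L_0 and ξ ∈ L_≤(★) if and only if ★ is 𝔐-CR3-compliant. -/

import Mathlib

inductive PForm (P : Type) : Type
  | atom : P → PForm P
  | neg  : PForm P → PForm P
  | and  : PForm P → PForm P → PForm P

inductive DForm (P : Type) : Type
  | atom  : P → DForm P
  | neg   : DForm P → DForm P
  | and   : DForm P → DForm P → DForm P
  | all   : DForm P → DForm P
  | boxLe : DForm P → DForm P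
  | boxLt : DForm P → DForm P
  | dyn   : PForm P → DForm P → DForm P

structure PrefModel (P : Type) where
  W : Type
  le : W → W → Prop
  refl : ∀ w, le w w
  trans : ∀ w₁ w₂ w₃, le w₁ w₂ → le w₂ w₃ → le w₁ w₃
  wf : WellFounded (fun w w' => le w w' ∧ ¬ le w' w)
  val : P → Set W

namespace PrefModel
variable {P : Type}
def lt (M : PrefModel P) (w w' : M.W) : Prop := M.le w w' ∧ ¬ M.le w' w
def Min (M : PrefModel P) (S : Set M.W) : Set M.W :=
  {w | w ∈ S ∧ ¬ ∃ w' ∈ S, M.le w' w ∧ ¬ M.le w w'}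
end PrefModel

def psat {P : Type} (M : PrefModel P) : PForm P → M.W → Prop
  | .atom p, w => w ∈ M.val p
  | .neg φ, w => ¬ psat M φ w
  | .and φ ψ, w => psat M φ w ∧ psat M ψ w

def pext {P : Type} (M : PrefModel P) (φ : PForm P) : Set M.W := {w | psat M φ w}

structure DynOp (P : Type) where
  rel : (M : PrefModel P) → PForm P → M.W → M.W → Prop
  refl : ∀ M φ w, rel M φ w w
  trans : ∀ M φ w₁ w₂ w₃, rel M φ w₁ w₂ → rel M φ w₂ w₃ → rel M φ w₁ w₃
  wf : ∀ M φ, WellFounded (fun w w' => rel M φ w w' ∧ ¬ rel M φ w' w)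

def DynOp.apply {P : Type} (s : DynOp P) (M : PrefModel P) (φ : PForm P) : PrefModel P where
  W := M.W
  le := s.rel M φ
  refl := s.refl M φ
  trans := s.trans M φ
  wf := s.wf M φ
  val := M.val

def DynOp.srel {P : Type} (s : DynOp P) (M : PrefModel P) (φ : PForm P) (w w' : M.W) : Prop :=
  s.rel M φ w w' ∧ ¬ s.rel M φ w' w

def PForm.toD {P : Type} : PForm P → DForm P
  | .atom p => .atom p
  | .neg φ => .neg φ.toD
  | .and φ ψ => .and φ.toD ψ.toD

namespace DForm
variable {P : Type}
def imp (ξ ψ : DForm P) : DForm P := .neg (.and ξ (.neg ψ))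
def iff (ξ ψ : DForm P) : DForm P := .and (imp ξ ψ) (imp ψ ξ)
def or (ξ ψ : DForm P) : DForm P := .neg (.and (.neg ξ) (.neg ψ))
def exi (ξ : DForm P) : DForm P := .neg (.all (.neg ξ))
def diaLt (ξ : DForm P) : DForm P := .neg (.boxLt (.neg ξ))
def mu (ξ : DForm P) : DForm P := .and ξ (.neg (diaLt ξ))
def bel (ψ χ : DForm P) : DForm P := .all (imp (mu χ) ψ)
end DForm

def dsat {P : Type} (s : DynOp P) : DForm P → (M : PrefModel P) → M.W → Prop
  | .atom p, M, w => w ∈ M.val p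
  | .neg ξ, M, w => ¬ dsat s ξ M w
  | .and ξ₁ ξ₂, M, w => dsat s ξ₁ M w ∧ dsat s ξ₂ M w
  | .all ξ, M, _ => ∀ w', dsat s ξ M w'
  | .boxLe ξ, M, w => ∀ w', M.le w' w → dsat s ξ M w'
  | .boxLt ξ, M, w => ∀ w', M.lt w' w → dsat s ξ M w'
  | .dyn φ ξ, M, w => dsat s ξ (s.apply M φ) w

def ClosedOver {P : Type} (s : DynOp P) (𝔐 : Set (PrefModel P)) : Prop :=
  ∀ M ∈ 𝔐, ∀ φ : PForm P, s.apply M φ ∈ 𝔐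

/-- `★` is `𝔐`-CR3-compliant. -/
def CR3Compliant {P : Type} (s : DynOp P) (𝔐 : Set (PrefModel P)) : Prop :=
  ∀ M ∈ 𝔐, ∀ (φ : PForm P) (w w' : M.W),
    ¬ psat M φ w → psat M φ w' → M.lt w w' →
      ∀ ξ : DForm P, dsat s (.dyn φ ξ) M w →
        ∃ w'' : M.W, ¬ psat M φ w'' ∧ dsat s (.dyn φ ξ) M w'' ∧ s.srel M φ w'' w'

lemma psat_apply {P : Type} (s : DynOp P) (M : PrefModel P) (φ ψ : PForm P) :
    ∀ w : M.W, psat (s.apply M φ) ψ w ↔ psat M ψ w := by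
  induction ψ with
  | atom p => intro w; rfl
  | neg χ ih => intro w; simp [psat, ih w]
  | and χ₁ χ₂ ih₁ ih₂ => intro w; simp [psat, ih₁ w, ih₂ w]

lemma toD_sat {P : Type} (s : DynOp P) (ψ : PForm P) :
    ∀ (M : PrefModel P) (w : M.W), dsat s ψ.toD M w ↔ psat M ψ w := by
  induction ψ with
  | atom p => intro M w; rfl
  | neg χ ih => intro M w; simp [PForm.toD, dsat, psat, ih M w]
  | and χ₁ χ₂ ih₁ ih₂ => intro M w; simp [PForm.toD, dsat, psat, ih₁ M w, ih₂ M w]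

lemma imp_sat {P : Type} (s : DynOp P) (a b : DForm P) (M : PrefModel P) (w : M.W) :
    dsat s (a.imp b) M w ↔ (dsat s a M w → dsat s b M w) := by
  simp only [DForm.imp, dsat]; tauto

theorem cr3_compliance_characterisation {P : Type}
    (𝔐 : Set (PrefModel P)) (s : DynOp P) (hclosed : ClosedOver s 𝔐) :
    (∀ (φ : PForm P) (ξ : DForm P), ∀ M ∈ 𝔐, ∀ w : M.W,
      dsat s ((DForm.dyn φ (.boxLt ((DForm.neg φ.toD).imp ξ))).imp
        (φ.toD.imp (.boxLt (.dyn φ ((DForm.neg φ.toD).imp ξ))))) M w) ↔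
      CR3Compliant s 𝔐 := by
  constructor
  · -- schema valid ⇒ CR3
    intro hval M hM φ w w' hnw hw' hlt ξ hξ
    by_contra hno
    push_neg at hno
    have h := hval φ (.neg ξ) M hM w'
    rw [imp_sat] at h
    have hprem : dsat s (DForm.dyn φ (.boxLt ((DForm.neg φ.toD).imp (.neg ξ)))) M w' := by
      show ∀ u, (s.apply M φ).lt u w' → _
      intro u hu
      rw [imp_sat]
      intro hnφ hξu
      have hnpu : ¬ psat M φ u := by
        simp only [dsat] at hnφ
        rw [toD_sat] at hnφ
        exact fun h => hnφ ((psat_apply s M φ φ u).mpr h)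
      exact hno u hnpu hξu hu
    have h2 := h hprem
    rw [imp_sat] at h2
    have hφ' : dsat s φ.toD M w' := (toD_sat s φ M w').mpr hw'
    have h3 := h2 hφ' w hlt
    show False
    have h4 : dsat s ((DForm.neg φ.toD).imp (DForm.neg ξ)) (s.apply M φ) w := h3
    replace h4 := (imp_sat s _ _ (s.apply M φ) w).mp h4
    have hnφw : dsat s (DForm.neg φ.toD) (s.apply M φ) w := by
      simp only [dsat]; exact fun h => hnw ((psat_apply s M φ φ w).mp ((toD_sat s φ (s.apply M φ) w).mp h))
    exact h4 hnφw hξ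
  · -- CR3 ⇒ schema valid
    intro hcr3 φ ξ M hM w
    rw [imp_sat]
    intro hbox
    rw [imp_sat]
    intro hφw w₀ hlt₀
    show dsat s ((DForm.neg φ.toD).imp ξ) (s.apply M φ) w₀
    refine (imp_sat s _ _ (s.apply M φ) w₀).mpr ?_
    intro hnφ₀
    have hnp₀ : ¬ psat M φ w₀ := by
      simp only [dsat] at hnφ₀; exact fun h => hnφ₀ ((toD_sat s φ (s.apply M φ) w₀).mpr ((psat_apply s M φ φ w₀).mpr h))
    have hpw : psat M φ w := (toD_sat s φ M w).mp hφw
    by_contra hnξ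
    obtain ⟨w'', hnpw'', hdyn, hsrel⟩ :=
      hcr3 M hM φ w₀ w hnp₀ hpw hlt₀ (.neg ξ) hnξ
    have hb := hbox w'' hsrel
    replace hb := (imp_sat s _ _ (s.apply M φ) w'').mp hb
    have : dsat s (DForm.neg φ.toD) (s.apply M φ) w'' := by
      simp only [dsat]; exact fun h => hnpw'' ((psat_apply s M φ φ w'').mp ((toD_sat s φ (s.apply M φ) w'').mp h))
    exact hdyn (hb this)
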